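/- The map σ₀ is a birational involution of ℙ²(ℂ) (there exists a nonzero homogeneous polynomial μ of degree 3 with σ₀ᵢ(σ₀(b)) = μ(b)·bᵢ for i = 0, 1, 2), and it lifts the twist β₀ × β₀ through Φ̃: the identity Φ̃ ∘ σ₀ = (β₀ × β₀) ∘ Φ̃ holds as rational maps ℙ² ⇢ ℙ¹×ℙ¹, i.e. writing Φ̃ = (Φ̃₁, Φ̃₂) in affine coordinates, Φ̃₁(σ₀(b)) = λ/Φ̃₁(b) and Φ̃₂(σ₀(b)) = λ/Φ̃₂(b) wherever both sides are defined. -/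
import Mathlib


/-- First affine coordinate of `Φ̃`. -/
noncomputable def Phi1 (t b₀ b₁ b₂ : ℂ) : ℂ := (b₁ * t - b₂) / (b₀ * t - b₁)

/-- Second affine coordinate of `Φ̃`. -/
noncomputable def Phi2 (l b₀ b₁ b₂ : ℂ) : ℂ :=
  -b₁ * (b₀ * l - b₁ * l - b₁ + b₂) / (b₁ ^ 2 - b₀ * b₂)

/-- First component of the involution `σ₀`. -/
noncomputable def sigma00 (l t b₀ b₁ b₂ : ℂ) : ℂ :=
  (l * b₀ + (-1 - l + t) * b₁) * (t * b₁ - b₂)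

/-- Second component of the involution `σ₀`. -/
noncomputable def sigma01 (l t b₀ b₁ b₂ : ℂ) : ℂ :=
  l * (t * b₀ - b₁) * (t * b₁ - b₂)

/-- Third component of the involution `σ₀`. -/
noncomputable def sigma02 (l t b₀ b₁ b₂ : ℂ) : ℂ :=
  l * (t * b₀ - b₁) * ((-l + t + l * t) * b₁ - t * b₂)

/-- `σ₀` is a birational involution of `ℙ²(ℂ)` (there is a nonzero homogeneous `μ` of
degree 3 with `σ₀ᵢ(σ₀(b)) = μ(b)·bᵢ` for `i = 0, 1, 2`), and it lifts the twist
`β₀ × β₀` through `Φ̃`: in affine coordinates, `Φ̃₁(σ₀(b)) = λ/Φ̃₁(b)` and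
`Φ̃₂(σ₀(b)) = λ/Φ̃₂(b)` wherever both sides are defined. -/
theorem sigma0_involution_lifts_beta0 (l t : ℂ) (hl0 : l ≠ 0) (hl1 : l ≠ 1)
    (ht0 : t ≠ 0) (ht1 : t ≠ 1) (htl : t ≠ l) :
    (∃ μ : MvPolynomial (Fin 3) ℂ, μ ≠ 0 ∧ μ.IsHomogeneous 3 ∧
      ∀ b₀ b₁ b₂ : ℂ,
        sigma00 l t (sigma00 l t b₀ b₁ b₂) (sigma01 l t b₀ b₁ b₂) (sigma02 l t b₀ b₁ b₂) =
            MvPolynomial.eval ![b₀, b₁, b₂] μ * b₀ ∧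
        sigma01 l t (sigma00 l t b₀ b₁ b₂) (sigma01 l t b₀ b₁ b₂) (sigma02 l t b₀ b₁ b₂) =
            MvPolynomial.eval ![b₀, b₁, b₂] μ * b₁ ∧
        sigma02 l t (sigma00 l t b₀ b₁ b₂) (sigma01 l t b₀ b₁ b₂) (sigma02 l t b₀ b₁ b₂) =
            MvPolynomial.eval ![b₀, b₁, b₂] μ * b₂) ∧
    ∀ b₀ b₁ b₂ : ℂ,
      b₀ * t - b₁ ≠ 0 → b₁ * t - b₂ ≠ 0 →
      b₁ ^ 2 - b₀ * b₂ ≠ 0 → b₁ * (b₀ * l - b₁ * l - b₁ + b₂) ≠ 0 →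
      sigma00 l t b₀ b₁ b₂ * t - sigma01 l t b₀ b₁ b₂ ≠ 0 →
      sigma01 l t b₀ b₁ b₂ ^ 2 - sigma00 l t b₀ b₁ b₂ * sigma02 l t b₀ b₁ b₂ ≠ 0 →
      Phi1 t (sigma00 l t b₀ b₁ b₂) (sigma01 l t b₀ b₁ b₂) (sigma02 l t b₀ b₁ b₂) =
          l / Phi1 t b₀ b₁ b₂ ∧
      Phi2 l (sigma00 l t b₀ b₁ b₂) (sigma01 l t b₀ b₁ b₂) (sigma02 l t b₀ b₁ b₂) =
          l / Phi2 l b₀ b₁ b₂ := by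
  constructor
  · refine ⟨MvPolynomial.C (l ^ 2 * (t - 1) ^ 2 * (t - l) ^ 2) * MvPolynomial.X 1 *
      (MvPolynomial.X 1 - MvPolynomial.C t * MvPolynomial.X 0) *
      (MvPolynomial.X 2 - MvPolynomial.C t * MvPolynomial.X 1), ?_, ?_, ?_⟩
    · intro h
      have h2 := congrArg (MvPolynomial.eval ![(1 : ℂ), 1, 0]) h
      simp at h2
      rcases h2 with (((h2 | h2) | h2) | h2) | h2
      · exact hl0 h2
      · exact ht1 (by linear_combination h2)
      · exact htl (by linear_combination h2)
      · exact ht1 (by linear_combination -h2)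
      · exact ht0 h2
    · have hc : (MvPolynomial.C (l ^ 2 * (t - 1) ^ 2 * (t - l) ^ 2) :
          MvPolynomial (Fin 3) ℂ).IsHomogeneous 0 := MvPolynomial.isHomogeneous_C _ _
      have hx1 : (MvPolynomial.X 1 : MvPolynomial (Fin 3) ℂ).IsHomogeneous 1 :=
        MvPolynomial.isHomogeneous_X _ _
      have hx0 : (MvPolynomial.X 0 : MvPolynomial (Fin 3) ℂ).IsHomogeneous 1 :=
        MvPolynomial.isHomogeneous_X _ _
      have hx2 : (MvPolynomial.X 2 : MvPolynomial (Fin 3) ℂ).IsHomogeneous 1 :=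
        MvPolynomial.isHomogeneous_X _ _
      have hct : (MvPolynomial.C t : MvPolynomial (Fin 3) ℂ).IsHomogeneous 0 :=
        MvPolynomial.isHomogeneous_C _ _
      have h10 : (MvPolynomial.X 1 - MvPolynomial.C t * MvPolynomial.X 0 :
          MvPolynomial (Fin 3) ℂ).IsHomogeneous 1 :=
        hx1.sub (by simpa using hct.mul hx0)
      have h21 : (MvPolynomial.X 2 - MvPolynomial.C t * MvPolynomial.X 1 :
          MvPolynomial (Fin 3) ℂ).IsHomogeneous 1 :=
        hx2.sub (by simpa using hct.mul hx1)
      have := ((hc.mul hx1).mul h10).mul h21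
      simpa using this
    · intro b₀ b₁ b₂
      simp only [MvPolynomial.eval_mul, MvPolynomial.eval_sub, MvPolynomial.eval_C,
        MvPolynomial.eval_X, Matrix.cons_val_zero, Matrix.cons_val_one, Matrix.head_cons,
        Matrix.cons_val_two, Matrix.tail_cons]
      refine ⟨?_, ?_, ?_⟩ <;>
        simp only [sigma00, sigma01, sigma02] <;> ring
  · intro b₀ b₁ b₂ h1 h2 h3 h4 h5 h6
    have h4' : -b₁ * (b₀ * l - b₁ * l - b₁ + b₂) ≠ 0 := by
      intro h; apply h4; linear_combination -h
    constructor
    · simp only [Phi1, div_div_eq_mul_div]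
      rw [div_eq_div_iff h5 h2]
      simp only [sigma00, sigma01, sigma02]; ring
    · simp only [Phi2, div_div_eq_mul_div]
      rw [div_eq_div_iff h6 h4']
      simp only [sigma00, sigma01, sigma02]; ring
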